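/- Let B_s, B_d be n×n complex matrices and let λ ∈ ℂ be an eigenvalue of B_s whose algebraic multiplicity (the multiplicity of λ as a root of the characteristic polynomial of B_s) equals its geometric multiplicity (the dimension of the kernel of B_s − λ·I). Then there exist μ ∈ ℂ and vectors x_s, x_d ∈ ℂⁿ with x_s ≠ 0 such that B_s·x_s = λ·x_s and B_s·x_d + B_d·x_s = λ·x_d + μ·x_s; equivalently, the dual complex matrix B̂ = B_s + B_d·ε has the eigenvalue λ + μ·ε with an appreciable eigenvector. -/

import Mathlib

open Matrix Polynomial

private lemma charpoly_shift {n : ℕ} (Bs : Matrix (Fin n) (Fin n) ℂ) (lam : ℂ) :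
    (Bs - lam • 1).charpoly = Bs.charpoly.comp (X + C lam) := by
  let φ : ℂ[X] →+* ℂ[X] := eval₂RingHom C (X + C lam)
  have hmap : (charmatrix Bs).map φ = charmatrix (Bs - lam • 1) := by
    ext i j
    by_cases h : i = j
    · subst h
      simp [φ, charmatrix_apply_eq, Matrix.sub_apply, Matrix.smul_apply, Matrix.one_apply_eq]
      ring
    · simp [φ, charmatrix_apply_ne _ _ _ h, Matrix.sub_apply, Matrix.smul_apply,
        Matrix.one_apply_ne h]
  have : φ Bs.charpoly = (Bs - lam • 1).charpoly := by
    rw [Matrix.charpoly, Matrix.charpoly, RingHom.map_det, RingHom.mapMatrix_apply, hmap]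
  rw [← this]
  simp [φ, Polynomial.comp, coe_eval₂RingHom]

private lemma charpoly_mulVecLin {n : ℕ} (A : Matrix (Fin n) (Fin n) ℂ) :
    (A.mulVecLin).charpoly = A.charpoly := by
  have h := LinearMap.charpoly_toMatrix (f := A.mulVecLin) (Pi.basisFun ℂ (Fin n))
  rw [LinearMap.toMatrix_eq_toMatrix', ← Matrix.toLin'_apply', LinearMap.toMatrix'_toLin'] at h
  exact h.symm

theorem stmt3 {n : ℕ} (Bs Bd : Matrix (Fin n) (Fin n) ℂ) (lam : ℂ)
    (hroot : Bs.charpoly.IsRoot lam)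
    (hmult : Polynomial.rootMultiplicity lam Bs.charpoly =
      Module.finrank ℂ (LinearMap.ker (Bs - lam • 1).mulVecLin)) :
    ∃ (μ : ℂ) (xs xd : Fin n → ℂ), xs ≠ 0 ∧ Bs.mulVec xs = lam • xs ∧
      Bs.mulVec xd + Bd.mulVec xs = lam • xd + μ • xs := by
  set φ : Module.End ℂ (Fin n → ℂ) := (Bs - lam • 1).mulVecLin with hφ
  have hm : Polynomial.rootMultiplicity lam Bs.charpoly
      = Module.finrank ℂ (φ.maxGenEigenspace 0) := by
    rw [LinearMap.finrank_maxGenEigenspace_zero_eq, charpoly_mulVecLin, charpoly_shift,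
      Polynomial.rootMultiplicity_eq_natTrailingDegree]
  have hker_le : LinearMap.ker φ ≤ φ.maxGenEigenspace 0 := by
    intro x hx
    rw [Module.End.mem_maxGenEigenspace]
    exact ⟨1, by simpa using hx⟩
  have hker_eq : LinearMap.ker φ = φ.maxGenEigenspace 0 :=
    Submodule.eq_of_le_of_finrank_le hker_le (le_of_eq (hm.symm.trans hmult))
  have hdisj : Disjoint (LinearMap.ker φ) (LinearMap.range φ) := by
    rw [Submodule.disjoint_def]
    rintro x hxk ⟨y, rfl⟩
    have hy : y ∈ φ.maxGenEigenspace 0 := by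
      rw [Module.End.mem_maxGenEigenspace]
      exact ⟨2, by simpa [pow_succ] using hxk⟩
    rw [← hker_eq] at hy
    simpa using hy
  have hcompl : IsCompl (LinearMap.ker φ) (LinearMap.range φ) := by
    refine ⟨hdisj, codisjoint_iff.mpr ?_⟩
    apply Submodule.eq_top_of_disjoint
    · rw [add_comm]
      exact (LinearMap.finrank_range_add_finrank_ker φ).ge
    · exact hdisj
  have hpos : 0 < Module.finrank ℂ (LinearMap.ker φ) := by
    rw [← hmult]
    exact (Polynomial.rootMultiplicity_pos (Matrix.charpoly_monic Bs).ne_zero).mpr hroot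
  haveI : Nontrivial (LinearMap.ker φ) := Module.nontrivial_of_finrank_pos hpos
  obtain ⟨μ, hμ⟩ := Module.End.exists_eigenvalue
    (((LinearMap.ker φ).projectionOnto (LinearMap.range φ) hcompl) ∘ₗ
      Bd.mulVecLin ∘ₗ (LinearMap.ker φ).subtype)
  obtain ⟨v, hv⟩ := hμ.exists_hasEigenvector
  have hproj : ((LinearMap.ker φ).projectionOnto (LinearMap.range φ) hcompl)
      (Bd.mulVec (v : Fin n → ℂ)) = μ • v := hv.apply_eq_smul
  have hsum := Submodule.projection_add_projection_eq_self hcompl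
    (Bd.mulVec (v : Fin n → ℂ))
  rw [Submodule.projection_apply, Submodule.projection_apply, hproj] at hsum
  push_cast at hsum
  have hmem : Bd.mulVec (v : Fin n → ℂ) - μ • (v : Fin n → ℂ) ∈ LinearMap.range φ := by
    rw [← eq_sub_of_add_eq' hsum]
    exact Submodule.coe_mem _
  obtain ⟨y, hy⟩ := hmem
  have hφy : φ y = Bs.mulVec y - lam • y := by
    simp only [hφ, Matrix.mulVecLin_apply, Matrix.sub_mulVec, Matrix.smul_mulVec,
      Matrix.one_mulVec]
  have hy' : Bs.mulVec y - lam • y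
      = Bd.mulVec (v : Fin n → ℂ) - μ • (v : Fin n → ℂ) := by rw [← hφy, hy]
  refine ⟨μ, (v : Fin n → ℂ), -y, ?_, ?_, ?_⟩
  · exact fun h => hv.2 (Submodule.coe_eq_zero.mp h)
  · have hxk : (Bs - lam • 1).mulVec (v : Fin n → ℂ) = 0 := v.2
    rw [Matrix.sub_mulVec, Matrix.smul_mulVec, Matrix.one_mulVec, sub_eq_zero] at hxk
    exact hxk
  · funext i
    have h2 := congrFun hy' i
    simp only [Pi.add_apply, Pi.sub_apply, Pi.smul_apply, Pi.neg_apply, smul_eq_mul,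
      Matrix.mulVec_neg] at h2 ⊢
    linear_combination -h2
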